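/- Let f be a subgraph counting function with parameters p ∈ (0,1), distinct integers m₁,…,m_l ≥ 2 and weights α₁,…,α_l ∈ ℝ, with gradient ∇f extended polynomially to [0,1]^n. Then for all X, Y ∈ [0,1]^n, ‖∇f(X) − ∇f(Y)‖₁ ≤ C ‖X − Y‖₁, where C = ½ Σ_{q=1}^l |α_q| m_q (m_q − 1). -/

import Mathlib

open MeasureTheory ProbabilityTheory Real Set

noncomputable section

/-- The real-valued vertex configuration associated to a boolean configuration. -/
def boolToR (n : ℕ) (X : Fin n → Bool) : Fin n → ℝ := fun i => if X i then 1 else 0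

/-- The 1-norm on ℝⁿ. -/
def norm1 (n : ℕ) (x : Fin n → ℝ) : ℝ := ∑ i, |x i|

/-- `C_j^m(X)`: the sum over (m-1)-tuples of pairwise distinct indices, all distinct
from `j`, of the products of the corresponding entries of `X`; `C_j^1 = 1`. -/
def Cvec (n m : ℕ) (X : Fin n → ℝ) (j : Fin n) : ℝ :=
  ∑ g ∈ Finset.univ.filter (fun g : Fin (m - 1) ↪ Fin n => ∀ k, g k ≠ j),
    ∏ k, X (g k)

/-- The subgraph counting function with parameters `p`, `m₁,…,m_l`, `α₁,…,α_l`. -/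
def scf (n l : ℕ) (p : ℝ) (m : Fin l → ℕ) (α : Fin l → ℝ) (X : Fin n → ℝ) : ℝ :=
  (∑ q, (α q / (n : ℝ) ^ (m q - 1)) * ∑ g : Fin (m q) ↪ Fin n, ∏ k, X (g k)) +
    Real.log (p / (1 - p)) * ∑ i, |X i|

/-- The discrete derivative `∂ⱼf(X) = (f(X^{j←1}) - f(X^{j←0}))/2`. -/
def dder (n : ℕ) (f : (Fin n → ℝ) → ℝ) (X : Fin n → ℝ) (j : Fin n) : ℝ :=
  (f (Function.update X j 1) - f (Function.update X j 0)) / 2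

/-- The polynomial extension of the discrete gradient of the subgraph counting function:
`∂ⱼf(X) = Σ_q (m_q α_q/(2 n^{m_q-1})) C_j^{m_q}(X) + ½ log(p/(1-p))`. -/
def gradf (n l : ℕ) (p : ℝ) (m : Fin l → ℕ) (α : Fin l → ℝ) (X : Fin n → ℝ)
    (j : Fin n) : ℝ :=
  (∑ q, ((m q : ℝ) * α q / (2 * (n : ℝ) ^ (m q - 1))) * Cvec n (m q) X j) +
    Real.log (p / (1 - p)) / 2

/-- `C_α = max{2, ½|log(p/(1-p))| + ½ Σ_q |α_q| m_q (m_q - 1)}`. -/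
def Calpha (l : ℕ) (p : ℝ) (m : Fin l → ℕ) (α : Fin l → ℝ) : ℝ :=
  max 2 (|Real.log (p / (1 - p))| / 2 + (∑ q, |α q| * (m q : ℝ) * ((m q : ℝ) - 1)) / 2)

/-- `Φ(X) = (1ₙ + tanh(∇f(X)))/2`, entrywise. -/
def Phi (n l : ℕ) (p : ℝ) (m : Fin l → ℕ) (α : Fin l → ℝ) (X : Fin n → ℝ) :
    Fin n → ℝ :=
  fun j => (1 + Real.tanh (gradf n l p m α X j)) / 2

/-- The set `X_f` of near fixed points of `X ↦ (1ₙ + tanh(∇f(X)))/2` in `[0,1]ⁿ`. -/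
def Xf (n l : ℕ) (p : ℝ) (m : Fin l → ℕ) (α : Fin l → ℝ) : Set (Fin n → ℝ) :=
  {X | (∀ i, X i ∈ Set.Icc (0:ℝ) 1) ∧
    norm1 n (fun j => X j - Phi n l p m α X j) ≤
      5000 * (Calpha l p m α) ^ 2 * (n : ℝ) ^ ((7:ℝ)/8)}

/-- The one-dimensional fixed point function `φ_α`. -/
def phiA (n l : ℕ) (p : ℝ) (m : Fin l → ℕ) (α : Fin l → ℝ) (x : ℝ) : ℝ :=
  (1 + Real.tanh (Real.log (p / (1 - p)) / 2 +
    (∑ q, (m q : ℝ) * α q * (∏ i ∈ Finset.Icc 1 (m q - 1), (1 - (i : ℝ) / n)) *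
      x ^ (m q - 1)) / 2)) / 2

theorem prod_lip (ι : Type*) [DecidableEq ι] (s : Finset ι) (a b : ι → ℝ)
    (ha : ∀ i, a i ∈ Set.Icc (0:ℝ) 1) (hb : ∀ i, b i ∈ Set.Icc (0:ℝ) 1) :
    |∏ i ∈ s, a i - ∏ i ∈ s, b i| ≤ ∑ i ∈ s, |a i - b i| := by
  induction s using Finset.induction_on with
  | empty => simp
  | insert _ _ hx ih =>
    rename_i i s
    rw [Finset.prod_insert hx, Finset.prod_insert hx, Finset.sum_insert hx]
    have h1b : ∏ j ∈ s, b j ≤ 1 := Finset.prod_le_one (fun j _ => (hb j).1) (fun j _ => (hb j).2)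
    have h0b : 0 ≤ ∏ j ∈ s, b j := Finset.prod_nonneg fun j _ => (hb j).1
    have key : a i * ∏ j ∈ s, a j - b i * ∏ j ∈ s, b j
        = a i * (∏ j ∈ s, a j - ∏ j ∈ s, b j) + (a i - b i) * ∏ j ∈ s, b j := by ring
    rw [key]
    have h2 := abs_add_le (a i * (∏ j ∈ s, a j - ∏ j ∈ s, b j)) ((a i - b i) * ∏ j ∈ s, b j)
    rw [abs_mul, abs_mul] at h2
    have hai : |a i| ≤ 1 := by rw [abs_of_nonneg (ha i).1]; exact (ha i).2
    have hai0 : 0 ≤ |a i| := abs_nonneg _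
    have hPb : |∏ j ∈ s, b j| ≤ 1 := by rw [abs_of_nonneg h0b]; exact h1b
    nlinarith [abs_nonneg (a i - b i), abs_nonneg (∏ j ∈ s, a j - ∏ j ∈ s, b j), ih]

theorem card_ne (d : ℕ) (k : Fin d) : Fintype.card {j : Fin d // j ≠ k} = d - 1 := by
  simp [Fintype.card_subtype_compl]

theorem sum_eval (d n : ℕ) (k : Fin d) (F : Fin n → ℝ) :
    ∑ f : Fin d → Fin n, F (f k) = (n:ℝ)^(d-1) * ∑ i, F i := by
  rw [Fintype.sum_equiv (Equiv.piSplitAt k fun _ => Fin n)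
    (fun f => F (f k)) (fun x => F x.1) (fun f => rfl)]
  rw [Fintype.sum_prod_type]
  simp only [Finset.sum_const, nsmul_eq_mul, ← Finset.mul_sum]
  congr 1
  rw [Finset.card_univ, Fintype.card_fun, Fintype.card_fin, card_ne]
  push_cast
  ring

theorem cvec_bound (n M : ℕ) (hM : 2 ≤ M) (X Y : Fin n → ℝ)
    (hX : ∀ i, X i ∈ Set.Icc (0:ℝ) 1) (hY : ∀ i, Y i ∈ Set.Icc (0:ℝ) 1) :
    ∑ j, |Cvec n M X j - Cvec n M Y j|
      ≤ ((M:ℝ) - 1) * (n:ℝ)^(M-1) * ∑ i, |X i - Y i| := by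
  set d := M - 1 with hd
  have hd1 : 1 ≤ d := by omega
  set S := ∑ i, |X i - Y i| with hS
  set F : (Fin d → Fin n) → ℝ := fun f => ∑ k, |X (f k) - Y (f k)| with hF
  have hFnn : ∀ f, 0 ≤ F f := fun f => Finset.sum_nonneg fun k _ => abs_nonneg _
  have hFsum : ∑ f : Fin d → Fin n, F f = (d:ℝ) * ((n:ℝ)^(d-1) * S) := by
    calc ∑ f : Fin d → Fin n, F f
        = ∑ k : Fin d, ∑ f : Fin d → Fin n, |X (f k) - Y (f k)| := Finset.sum_comm
      _ = ∑ k : Fin d, (n:ℝ)^(d-1) * S := by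
          refine Finset.sum_congr rfl fun k _ => ?_
          exact sum_eval d n k (fun i => |X i - Y i|)
      _ = (d:ℝ) * ((n:ℝ)^(d-1) * S) := by
          rw [Finset.sum_const, nsmul_eq_mul, Finset.card_univ, Fintype.card_fin]
  have hj : ∀ j : Fin n, |Cvec n M X j - Cvec n M Y j| ≤ ∑ f : Fin d → Fin n, F f := by
    intro j
    have e1 : Cvec n M X j - Cvec n M Y j
        = ∑ g ∈ Finset.univ.filter (fun g : Fin d ↪ Fin n => ∀ k, g k ≠ j),
            ((∏ k, X (g k)) - ∏ k, Y (g k)) := by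
      rw [Cvec, Cvec, ← Finset.sum_sub_distrib]
    rw [e1]
    calc |∑ g ∈ Finset.univ.filter (fun g : Fin d ↪ Fin n => ∀ k, g k ≠ j),
            ((∏ k, X (g k)) - ∏ k, Y (g k))|
        ≤ ∑ g ∈ Finset.univ.filter (fun g : Fin d ↪ Fin n => ∀ k, g k ≠ j),
            |(∏ k, X (g k)) - ∏ k, Y (g k)| := Finset.abs_sum_le_sum_abs _ _
      _ ≤ ∑ g ∈ Finset.univ.filter (fun g : Fin d ↪ Fin n => ∀ k, g k ≠ j), F ⇑g := by
          refine Finset.sum_le_sum fun g _ => ?_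
          exact prod_lip (Fin d) Finset.univ (fun k => X (g k)) (fun k => Y (g k))
            (fun k => hX _) (fun k => hY _)
      _ ≤ ∑ g : Fin d ↪ Fin n, F ⇑g := by
          refine Finset.sum_le_sum_of_subset_of_nonneg (Finset.filter_subset _ _)
            fun g _ _ => hFnn _
      _ = ∑ f ∈ Finset.univ.image (fun g : Fin d ↪ Fin n => ⇑g), F f := by
          rw [Finset.sum_image]
          intro g1 _ g2 _ h
          exact DFunLike.coe_injective h
      _ ≤ ∑ f : Fin d → Fin n, F f := by
          exact Finset.sum_le_sum_of_subset_of_nonneg (Finset.subset_univ _)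
            fun f _ _ => hFnn _
  calc ∑ j, |Cvec n M X j - Cvec n M Y j|
      ≤ ∑ _j : Fin n, ∑ f : Fin d → Fin n, F f := Finset.sum_le_sum fun j _ => hj j
    _ = (n:ℝ) * ((d:ℝ) * ((n:ℝ)^(d-1) * S)) := by
        rw [Finset.sum_const, nsmul_eq_mul, Finset.card_univ, Fintype.card_fin, hFsum]
    _ = ((M:ℝ) - 1) * (n:ℝ)^(M-1) * S := by
        have h1 : (d:ℝ) = (M:ℝ) - 1 := by
          rw [hd]; push_cast [Nat.cast_sub (by omega : 1 ≤ M)]; ring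
        have h2 : (n:ℝ) * (n:ℝ)^(d-1) = (n:ℝ)^d := by
          rw [← pow_succ']
          congr 1
          omega
        rw [← hd, ← h1, ← h2]
        ring

/-- for all `X, Y ∈ [0,1]ⁿ`,
`‖∇f(X) - ∇f(Y)‖₁ ≤ C ‖X - Y‖₁` with `C = ½ Σ_q |α_q| m_q (m_q - 1)`. -/
theorem stmt4 (n l : ℕ) (p : ℝ) (hp : p ∈ Set.Ioo (0:ℝ) 1)
    (m : Fin l → ℕ) (hm : ∀ q, 2 ≤ m q) (hminj : Function.Injective m)
    (α : Fin l → ℝ) (X Y : Fin n → ℝ)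
    (hX : ∀ i, X i ∈ Set.Icc (0:ℝ) 1) (hY : ∀ i, Y i ∈ Set.Icc (0:ℝ) 1) :
    norm1 n (fun j => gradf n l p m α X j - gradf n l p m α Y j) ≤
      ((∑ q, |α q| * (m q : ℝ) * ((m q : ℝ) - 1)) / 2) * norm1 n (fun i => X i - Y i) := by
  rcases Nat.eq_zero_or_pos n with hn | hn
  · subst hn
    simp [norm1]
  set S := norm1 n (fun i => X i - Y i) with hSdef
  have hgrad : ∀ j, gradf n l p m α X j - gradf n l p m α Y j
      = ∑ q, ((m q : ℝ) * α q / (2 * (n : ℝ) ^ (m q - 1))) *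
          (Cvec n (m q) X j - Cvec n (m q) Y j) := by
    intro j
    simp only [gradf, add_sub_add_right_eq_sub, ← Finset.sum_sub_distrib, ← mul_sub]
  have hnpos : ∀ q : Fin l, (0:ℝ) < 2 * (n : ℝ) ^ (m q - 1) := by
    intro q
    have : (0:ℝ) < (n:ℝ) := by exact_mod_cast hn
    positivity
  calc norm1 n (fun j => gradf n l p m α X j - gradf n l p m α Y j)
      = ∑ j, |∑ q, ((m q : ℝ) * α q / (2 * (n : ℝ) ^ (m q - 1))) *
          (Cvec n (m q) X j - Cvec n (m q) Y j)| := by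
        unfold norm1
        exact Finset.sum_congr rfl fun j _ => by simp only []; rw [hgrad j]
    _ ≤ ∑ j, ∑ q, |(m q : ℝ) * α q / (2 * (n : ℝ) ^ (m q - 1))| *
          |Cvec n (m q) X j - Cvec n (m q) Y j| := by
        refine Finset.sum_le_sum fun j _ => ?_
        refine le_trans (Finset.abs_sum_le_sum_abs _ _) ?_
        exact le_of_eq (Finset.sum_congr rfl fun q _ => abs_mul _ _)
    _ = ∑ q, |(m q : ℝ) * α q / (2 * (n : ℝ) ^ (m q - 1))| *
          ∑ j, |Cvec n (m q) X j - Cvec n (m q) Y j| := by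
        rw [Finset.sum_comm]
        exact Finset.sum_congr rfl fun q _ => by rw [Finset.mul_sum]
    _ ≤ ∑ q, |(m q : ℝ) * α q / (2 * (n : ℝ) ^ (m q - 1))| *
          (((m q : ℝ) - 1) * (n : ℝ) ^ (m q - 1) * S) := by
        refine Finset.sum_le_sum fun q _ => ?_
        exact mul_le_mul_of_nonneg_left
          (cvec_bound n (m q) (hm q) X Y hX hY) (abs_nonneg _)
    _ = ∑ q, |α q| * (m q : ℝ) * ((m q : ℝ) - 1) / 2 * S := by
        refine Finset.sum_congr rfl fun q _ => ?_
        rw [abs_div, abs_mul, abs_of_nonneg (Nat.cast_nonneg (m q)),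
          abs_of_pos (hnpos q)]
        have hne : (2 * (n : ℝ) ^ (m q - 1)) ≠ 0 := ne_of_gt (hnpos q)
        field_simp
    _ = ((∑ q, |α q| * (m q : ℝ) * ((m q : ℝ) - 1)) / 2) * S := by
        rw [Finset.sum_div, Finset.sum_mul]


end
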